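/- Let S be a finite set of at least 2 points in ℝ² in convex position and p a point outside the convex hull of S. Then the function that assigns to each q ∈ S the signed side of q relative to each line through p and a point of S determines exactly two tangent points: there exist exactly two points q ∈ S such that S lies in a closed half-plane bounded by the line through p and q, unless all points of S ∪ {p} are collinear. -/

import Mathlib

/-- Cross product of planar vectors. -/
def cross (u v : ℝ × ℝ) : ℝ := u.1 * v.2 - u.2 * v.1

lemma cross_key (a u v : ℝ × ℝ) :
    (a.1 * u.1 + a.2 * u.2) * cross a v - cross a u * (a.1 * v.1 + a.2 * v.2)
      = (a.1 ^ 2 + a.2 ^ 2) * cross u v := by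
  unfold cross; ring

/-- Let `S` be a finite set of at least two points in convex position and let `p` lie outside
the convex hull of `S`. If `S ∪ {p}` is not collinear, then there are two distinct tangent
points from `p` to `S`: a `q₁` with all of `S` in the closed half-plane on one side of the
line through `p` and `q₁`, and a `q₂` with all of `S` in the closed half-plane on the other
side of the line through `p` and `q₂`. -/
theorem two_tangent_points (S : Finset (ℝ × ℝ)) (hcard : 2 ≤ S.card)
    (hconv : ∀ x ∈ S, x ∈ Set.extremePoints ℝ (convexHull ℝ (S : Set (ℝ × ℝ))))
    (p : ℝ × ℝ) (hp : p ∉ convexHull ℝ (S : Set (ℝ × ℝ)))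
    (hnc : ¬ Collinear ℝ ((S : Set (ℝ × ℝ)) ∪ {p})) :
    ∃ q₁ ∈ S, ∃ q₂ ∈ S, q₁ ≠ q₂ ∧
      (∀ x ∈ S, 0 ≤ cross (q₁ - p) (x - p)) ∧
      (∀ x ∈ S, cross (q₂ - p) (x - p) ≤ 0) := by
  have hSne : S.Nonempty := Finset.card_pos.mp (by omega)
  -- separate p from the hull
  obtain ⟨f, u, hfu, hup⟩ :=
    geometric_hahn_banach_closed_point (convex_convexHull ℝ (S : Set (ℝ × ℝ)))
      ((S.finite_toSet.isCompact_convexHull ℝ).isClosed) hp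
  set a : ℝ × ℝ := (-(f (1, 0)), -(f (0, 1))) with ha_def
  have hf_eval : ∀ v : ℝ × ℝ, f v = f (1, 0) * v.1 + f (0, 1) * v.2 := by
    intro v
    have hv : v = v.1 • ((1 : ℝ), (0 : ℝ)) + v.2 • ((0 : ℝ), (1 : ℝ)) := by
      ext <;> simp
    rw [hv, map_add, map_smul, map_smul]
    simp [smul_eq_mul]
    ring
  set F : ℝ × ℝ → ℝ := fun v => a.1 * v.1 + a.2 * v.2 with hF_def
  have hFpos : ∀ x ∈ S, 0 < F (x - p) := by
    intro x hx
    have hx' : f x < u := hfu x (subset_convexHull ℝ _ hx)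
    have : F (x - p) = f p - f x := by
      simp only [hF_def, ha_def, hf_eval p, hf_eval x, Prod.fst_sub, Prod.snd_sub]
      ring
    rw [this]; linarith
  have ha2 : 0 < a.1 ^ 2 + a.2 ^ 2 := by
    obtain ⟨x, hx⟩ := hSne
    rcases eq_or_ne a 0 with h | h
    · exfalso
      have h0 := hFpos x hx
      have : F (x - p) = 0 := by
        show a.1 * (x - p).1 + a.2 * (x - p).2 = 0
        rw [h]; simp
      linarith
    · have : a.1 ≠ 0 ∨ a.2 ≠ 0 := by
        by_contra hc
        push_neg at hc
        exact h (Prod.ext hc.1 hc.2)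
      rcases this with h1 | h1 <;> positivity
  -- the ordering function
  set t : ℝ × ℝ → ℝ := fun x => cross a (x - p) / F (x - p) with ht_def
  have key : ∀ q ∈ S, ∀ x ∈ S, t q ≤ t x → 0 ≤ cross (q - p) (x - p) := by
    intro q hq x hx hle
    have hq' := hFpos q hq
    have hx' := hFpos x hx
    rw [ht_def, div_le_div_iff₀ hq' hx'] at hle
    have hid := cross_key a (q - p) (x - p)
    have : 0 ≤ (a.1 ^ 2 + a.2 ^ 2) * cross (q - p) (x - p) := by
      rw [← hid]
      simp only [hF_def] at hle ⊢
      nlinarith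
    nlinarith
  obtain ⟨q₁, hq₁, hq₁min⟩ := S.exists_min_image t hSne
  obtain ⟨q₂, hq₂, hq₂max⟩ := S.exists_max_image t hSne
  refine ⟨q₁, hq₁, q₂, hq₂, ?_, fun x hx => key q₁ hq₁ x hx (hq₁min x hx), ?_⟩
  · -- q₁ ≠ q₂, else everything is collinear
    rintro rfl
    apply hnc
    have hall : ∀ x ∈ S, cross (q₁ - p) (x - p) = 0 := by
      intro x hx
      have h1 := key q₁ hq₁ x hx (hq₁min x hx)
      have h2 := key x hx q₁ hq₁ (hq₂max x hx)
      have : cross (q₁ - p) (x - p) = - cross (x - p) (q₁ - p) := by unfold cross; ring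
      linarith [this ▸ h1, h2, (by unfold cross; ring : cross (x - p) (q₁ - p) = - cross (q₁ - p) (x - p))]
    have hqp : q₁ - p ≠ 0 := by
      intro h
      have := hFpos q₁ hq₁
      rw [h] at this
      simp [hF_def] at this
    have hpmem : p ∈ (S : Set (ℝ × ℝ)) ∪ {p} := Or.inr rfl
    rw [collinear_iff_of_mem hpmem]
    refine ⟨q₁ - p, ?_⟩
    rintro x (hx | rfl)
    · have hc : cross (q₁ - p) (x - p) = 0 := hall x hx
      have h1 : (q₁ - p).1 ≠ 0 ∨ (q₁ - p).2 ≠ 0 := by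
        by_contra hcon
        push_neg at hcon
        exact hqp (Prod.ext hcon.1 hcon.2)
      unfold cross at hc
      simp only [Prod.fst_sub, Prod.snd_sub] at hc h1
      rcases h1 with h1 | h1
      · refine ⟨(x.1 - p.1) / (q₁.1 - p.1), ?_⟩
        ext
        · simp only [Prod.fst_add, Prod.smul_fst, smul_eq_mul, Prod.fst_sub, vadd_eq_add]
          field_simp
          ring
        · simp only [Prod.snd_add, Prod.smul_snd, smul_eq_mul, Prod.snd_sub, vadd_eq_add]
          field_simp
          nlinarith [hc]
      · refine ⟨(x.2 - p.2) / (q₁.2 - p.2), ?_⟩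
        ext
        · simp only [Prod.fst_add, Prod.smul_fst, smul_eq_mul, Prod.fst_sub, vadd_eq_add]
          field_simp
          nlinarith [hc]
        · simp only [Prod.snd_add, Prod.smul_snd, smul_eq_mul, Prod.snd_sub, vadd_eq_add]
          field_simp
          ring
    · exact ⟨0, by simp [vadd_eq_add]⟩
  · intro x hx
    have h := key x hx q₂ hq₂ (hq₂max x hx)
    have : cross (q₂ - p) (x - p) = - cross (x - p) (q₂ - p) := by unfold cross; ring
    linarith
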